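/- Let T be a unitary operator on L²(μ) induced by a mixing measure-preserving automorphism of a probability space (X, μ), i.e. Tⁿ → Θ in the weak operator topology as n → ∞, where Θ is the projection onto constants. Let (a^j) be a dissipative sequence of probability weights on ℤ, meaning a^j_z ≥ 0, ∑_z a^j_z = 1, and max_z a^j_z → 0 as j → ∞. Then for every f ∈ L²(μ), ‖∑_z a^j_z T^z f − Θf‖ → 0 in L²-norm. -/

import Mathlib

open MeasureTheory Filter

private lemma inner_const_one_aux {X : Type*} [MeasurableSpace X] (μ : Measure X)
    [IsProbabilityMeasure μ] (g : Lp ℝ 2 μ) :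
    (inner ℝ g (Lp.const 2 μ (1:ℝ)) : ℝ) = ∫ x, g x ∂μ := by
  rw [MeasureTheory.L2.inner_def]
  refine integral_congr_ae ?_
  filter_upwards [Lp.coeFn_const (p := 2) (μ := μ) (c := (1:ℝ))] with x hx
  simp [hx, RCLike.inner_apply]

private lemma one_inner_one_aux {X : Type*} [MeasurableSpace X] (μ : Measure X)
    [IsProbabilityMeasure μ] :
    (inner ℝ (Lp.const 2 μ (1:ℝ)) (Lp.const 2 μ (1:ℝ)) : ℝ) = 1 := by
  rw [inner_const_one_aux μ]
  rw [integral_congr_ae (Lp.coeFn_const (p := 2) (μ := μ) (c := (1:ℝ)))]; simp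

set_option maxHeartbeats 1000000 in
/-- Blum–Hanson type theorem: if `T` is the unitary Koopman operator of a mixing
automorphism (`Tⁿ → Θ` weakly, `Θ` the projection onto constants) and `(a^j)` is a
dissipative sequence of probability weights on `ℤ` (nonnegative, summing to `1`,
with `sup_z a^j_z → 0`), then `∑_z a^j_z T^z f → Θ f` in `L²`-norm. -/
theorem stmt2 {X : Type*} [MeasurableSpace X] (μ : Measure X) [IsProbabilityMeasure μ]
    (T : Lp ℝ 2 μ ≃ₗᵢ[ℝ] Lp ℝ 2 μ) (Θ : Lp ℝ 2 μ →L[ℝ] Lp ℝ 2 μ)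
    (hΘ : ∀ f : Lp ℝ 2 μ, Θ f = (∫ x, f x ∂μ) • (Lp.const 2 μ (1 : ℝ)))
    (hmix : ∀ f g : Lp ℝ 2 μ,
      Tendsto (fun n : ℕ => (inner ℝ ((T ^ (n : ℤ)) f) g : ℝ)) atTop (nhds (inner ℝ (Θ f) g)))
    (a : ℕ → ℤ → ℝ)
    (ha_nonneg : ∀ j z, 0 ≤ a j z)
    (ha_summable : ∀ j, Summable (a j))
    (ha_sum : ∀ j, ∑' z, a j z = 1)
    (ha_max : Tendsto (fun j => ⨆ z, a j z) atTop (nhds 0))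
    (f : Lp ℝ 2 μ) :
    Tendsto (fun j => ‖(∑' z : ℤ, a j z • (T ^ z) f) - Θ f‖) atTop (nhds 0) := by
  set one : Lp ℝ 2 μ := Lp.const 2 μ (1 : ℝ) with hone_def
  set I : ℝ := ∫ x, f x ∂μ with hI_def
  set c : ℤ → ℝ := fun k => (inner ℝ ((T ^ k) f) f : ℝ) with hc_def
  set B : ℝ := ‖f‖ ^ 2 with hB_def
  have hB0 : 0 ≤ B := by positivity
  -- power composition
  have hpow : ∀ (u v : ℤ) (x : Lp ℝ 2 μ), (T ^ (u + v)) x = (T ^ u) ((T ^ v) x) := by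
    intro u v x; rw [zpow_add]; rfl
  -- shifted mixing
  have hshift : ∀ (z : ℤ) (g : Lp ℝ 2 μ),
      Tendsto (fun n : ℕ => (inner ℝ ((T ^ ((n : ℤ) + z)) f) g : ℝ)) atTop
        (nhds (inner ℝ (Θ f) g)) := by
    intro z g
    obtain ⟨m, rfl | rfl⟩ := Int.eq_nat_or_neg z
    · have h := (hmix f g).comp (tendsto_add_atTop_nat m)
      have he : ((fun n : ℕ => (inner ℝ ((T ^ (n : ℤ)) f) g : ℝ)) ∘ (fun n => n + m))
          = fun n : ℕ => (inner ℝ ((T ^ ((n : ℤ) + m)) f) g : ℝ) := by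
        funext n; simp only [Function.comp]; norm_cast
      rwa [he] at h
    · rw [← tendsto_add_atTop_iff_nat m]
      have he : (fun n : ℕ => (inner ℝ ((T ^ (((n + m : ℕ) : ℤ) + -(m:ℤ))) f) g : ℝ))
          = fun n : ℕ => (inner ℝ ((T ^ (n : ℤ)) f) g : ℝ) := by
        funext n; congr 2; push_cast; ring
      rw [he]; exact hmix f g
  -- Θ is invariant: ∫ T^z f = ∫ f
  have hΘT : ∀ z : ℤ, (∫ x, ((T ^ z) f) x ∂μ) = I := by
    intro z
    have h1 := hmix ((T ^ z) f) one
    have he : (fun n : ℕ => (inner ℝ ((T ^ (n : ℤ)) ((T ^ z) f)) one : ℝ))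
        = fun n : ℕ => (inner ℝ ((T ^ ((n : ℤ) + z)) f) one : ℝ) := by
      funext n; rw [hpow]
    rw [he] at h1
    have h2 := tendsto_nhds_unique h1 (hshift z one)
    rw [hΘ ((T ^ z) f), hΘ f] at h2
    simp only [real_inner_smul_left] at h2
    have hoo : (inner ℝ one one : ℝ) = 1 := one_inner_one_aux μ
    rw [hoo] at h2
    simpa using h2
  -- inner ℝ products with Θ f
  have hTone : ∀ z : ℤ, (inner ℝ ((T ^ z) f) one : ℝ) = I := by
    intro z; rw [hone_def, inner_const_one_aux μ]; exact hΘT z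
  have hTzΘ : ∀ z : ℤ, (inner ℝ ((T ^ z) f) (Θ f) : ℝ) = I ^ 2 := by
    intro z; rw [hΘ f, real_inner_smul_right, hTone z]; ring
  have hfone : (inner ℝ f one : ℝ) = I := by
    rw [hone_def, inner_const_one_aux μ]
  have hΘf_inner : (inner ℝ (Θ f) f : ℝ) = I ^ 2 := by
    rw [hΘ f, real_inner_smul_left, real_inner_comm, hfone]; ring
  have hΘΘ : (inner ℝ (Θ f) (Θ f) : ℝ) = I ^ 2 := by
    rw [hΘ f, real_inner_smul_left, real_inner_smul_right, one_inner_one_aux μ]; ring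
  -- c properties
  have hc_lim : Tendsto (fun n : ℕ => c (n : ℤ)) atTop (nhds (I ^ 2)) := by
    have := hmix f f; rwa [hΘf_inner] at this
  have hc_symm : ∀ k : ℤ, c (-k) = c k := by
    intro k
    have h1 : (T ^ k) ((T ^ (-k)) f) = f := by
      rw [← hpow]; simp
    calc c (-k) = (inner ℝ ((T ^ k) ((T ^ (-k)) f)) ((T ^ k) f) : ℝ) := by
          rw [LinearIsometryEquiv.inner_map_map]
      _ = (inner ℝ f ((T ^ k) f) : ℝ) := by rw [h1]
      _ = c k := real_inner_comm _ _
  have hc_abs : ∀ k : ℤ, |c k| ≤ B := by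
    intro k
    calc |c k| ≤ ‖(T ^ k) f‖ * ‖f‖ := abs_real_inner_le_norm _ _
      _ = B := by rw [LinearIsometryEquiv.norm_map]; rw [hB_def]; ring
  have hI_sq_le : I ^ 2 ≤ B := by
    have h1 : |I| ≤ ‖f‖ * ‖one‖ := by rw [← hfone]; exact abs_real_inner_le_norm _ _
    have h2 : ‖one‖ = 1 := by
      have := one_inner_one_aux μ (X := X)
      have h3 : ‖(Lp.const 2 μ (1:ℝ))‖ ^ 2 = 1 := by
        rw [← real_inner_self_eq_norm_sq]; exact this
      nlinarith [norm_nonneg (Lp.const 2 μ (1:ℝ)), hone_def]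
    have : |I| ≤ ‖f‖ := by rw [h2] at h1; linarith
    calc I ^ 2 = |I| ^ 2 := (sq_abs I).symm
      _ ≤ ‖f‖ ^ 2 := by nlinarith [abs_nonneg I]
      _ = B := hB_def.symm
  have hc_bound : ∀ k : ℤ, |c k - I ^ 2| ≤ 2 * B := by
    intro k
    have := hc_abs k
    have h2 : |I ^ 2| ≤ B := by rwa [abs_of_nonneg (sq_nonneg I)]
    calc |c k - I ^ 2| ≤ |c k| + |I ^ 2| := abs_sub _ _
      _ ≤ 2 * B := by linarith
  -- tail estimate for c
  have hc_tail : ∀ ε : ℝ, 0 < ε → ∃ K : ℕ, ∀ k : ℤ, (K : ℤ) ≤ |k| → |c k - I ^ 2| ≤ ε := by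
    intro ε hε
    rw [Metric.tendsto_atTop] at hc_lim
    obtain ⟨N, hN⟩ := hc_lim ε hε
    refine ⟨N, fun k hk => ?_⟩
    have habs : c k = c |k| := by
      rcases abs_choice k with h | h
      · rw [h]
      · rw [h, hc_symm]
    have hnat : |k| = ((|k|.toNat : ℕ) : ℤ) := by
      simp [Int.toNat_of_nonneg (abs_nonneg k)]
    have hge : N ≤ |k|.toNat := by omega
    have := hN |k|.toNat hge
    rw [Real.dist_eq] at this
    rw [habs, hnat]
    exact le_of_lt this
  -- summability facts
  have hsmul_norm : ∀ j z, ‖a j z • (T ^ z) f‖ = a j z * ‖f‖ := by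
    intro j z
    rw [norm_smul, LinearIsometryEquiv.norm_map, Real.norm_eq_abs, abs_of_nonneg (ha_nonneg j z)]
  have hsum : ∀ j, Summable (fun z : ℤ => a j z • (T ^ z) f) := by
    intro j
    refine Summable.of_norm ?_
    refine ((ha_summable j).mul_right ‖f‖).congr fun z => ?_
    exact (hsmul_norm j z).symm
  set P : ℕ → Lp ℝ 2 μ := fun j => ∑' z : ℤ, a j z • (T ^ z) f with hP_def
  -- inner ℝ product expansion
  have hP_inner : ∀ (j : ℕ) (y : Lp ℝ 2 μ),
      (inner ℝ (P j) y : ℝ) = ∑' z : ℤ, a j z * (inner ℝ ((T ^ z) f) y : ℝ) := by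
    intro j y
    rw [real_inner_comm]
    have h1 : (inner ℝ y (P j) : ℝ) = (innerSL ℝ y) (P j) := rfl
    rw [h1, hP_def]
    rw [ContinuousLinearMap.map_tsum _ (hsum j)]
    congr 1; funext z
    simp [real_inner_smul_right, real_inner_comm]
  -- inner ℝ with Θ f
  have hPΘ : ∀ j, (inner ℝ (P j) (Θ f) : ℝ) = I ^ 2 := by
    intro j
    rw [hP_inner j (Θ f)]
    have : (fun z : ℤ => a j z * (inner ℝ ((T ^ z) f) (Θ f) : ℝ))
        = fun z => a j z * I ^ 2 := by funext z; rw [hTzΘ z]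
    rw [this, tsum_mul_right, ha_sum j, one_mul]
  -- the pairwise inner ℝ products
  have hTT : ∀ z w : ℤ, (inner ℝ ((T ^ z) f) ((T ^ w) f) : ℝ) = c (z - w) := by
    intro z w
    have h1 : (T ^ z) f = (T ^ w) ((T ^ (z - w)) f) := by
      rw [← hpow]; congr 1; ring
    rw [h1, LinearIsometryEquiv.inner_map_map]
  -- summability of coefficient sums
  have hSc : ∀ (j : ℕ) (z : ℤ), Summable (fun w : ℤ => a j w * c (z - w)) := by
    intro j z
    refine Summable.of_norm_bounded ((ha_summable j).mul_right B) fun w => ?_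
    rw [Real.norm_eq_abs, abs_mul, abs_of_nonneg (ha_nonneg j w)]
    exact mul_le_mul_of_nonneg_left (hc_abs _) (ha_nonneg j w)
  have hSd : ∀ (j : ℕ) (z : ℤ), Summable (fun w : ℤ => a j w * (c (z - w) - I ^ 2)) := by
    intro j z
    refine Summable.of_norm_bounded ((ha_summable j).mul_right (2 * B)) fun w => ?_
    rw [Real.norm_eq_abs, abs_mul, abs_of_nonneg (ha_nonneg j w)]
    exact mul_le_mul_of_nonneg_left (hc_bound _) (ha_nonneg j w)
  have hSe : ∀ (j : ℕ) (z : ℤ), Summable (fun w : ℤ => a j w * |c (z - w) - I ^ 2|) := by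
    intro j z
    refine Summable.of_norm_bounded ((ha_summable j).mul_right (2 * B)) fun w => ?_
    rw [Real.norm_eq_abs, abs_mul, abs_of_nonneg (ha_nonneg j w), abs_abs]
    exact mul_le_mul_of_nonneg_left (hc_bound _) (ha_nonneg j w)
  set D : ℕ → ℤ → ℝ := fun j z => ∑' w : ℤ, a j w * (c (z - w) - I ^ 2) with hD_def
  have hD_abs : ∀ j z, |D j z| ≤ ∑' w : ℤ, a j w * |c (z - w) - I ^ 2| := by
    intro j z
    have h := norm_tsum_le_tsum_norm (f := fun w : ℤ => a j w * (c (z - w) - I ^ 2)) ?_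
    · rw [Real.norm_eq_abs] at h
      refine h.trans ?_
      refine Summable.tsum_le_tsum (fun w => ?_) ((hSd j z).abs) (hSe j z)
      rw [Real.norm_eq_abs, abs_mul, abs_of_nonneg (ha_nonneg j w)]
    · exact (hSe j z).congr fun w => by
        rw [Real.norm_eq_abs, abs_mul, abs_of_nonneg (ha_nonneg j w)]
  have hD_bound : ∀ j z, |D j z| ≤ 2 * B := by
    intro j z
    refine (hD_abs j z).trans ?_
    have h1 : ∑' w : ℤ, a j w * |c (z - w) - I ^ 2| ≤ ∑' w : ℤ, a j w * (2 * B) := by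
      refine Summable.tsum_le_tsum (fun w => ?_) (hSe j z) ((ha_summable j).mul_right _)
      exact mul_le_mul_of_nonneg_left (hc_bound _) (ha_nonneg j w)
    rw [tsum_mul_right, ha_sum j, one_mul] at h1
    exact h1
  -- norm squared expansion
  have hPP : ∀ j, (inner ℝ (P j) (P j) : ℝ) - I ^ 2 = ∑' z : ℤ, a j z * D j z := by
    intro j
    have hE : (inner ℝ (P j) (P j) : ℝ) = ∑' z : ℤ, a j z * (∑' w : ℤ, a j w * c (z - w)) := by
      rw [hP_inner j (P j)]
      refine tsum_congr fun z => ?_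
      congr 1
      rw [real_inner_comm, hP_inner j ((T ^ z) f)]
      refine tsum_congr fun w => ?_
      rw [hTT, show w - z = -(z - w) by ring, hc_symm]
    have hDz : ∀ z : ℤ, D j z = (∑' w : ℤ, a j w * c (z - w)) - I ^ 2 := by
      intro z
      have h1 : D j z = ∑' w : ℤ, (a j w * c (z - w) - a j w * I ^ 2) := by
        simp only [hD_def]
        exact tsum_congr fun w => by ring
      rw [h1, Summable.tsum_sub (hSc j z) ((ha_summable j).mul_right _), tsum_mul_right, ha_sum j, one_mul]
    have h2 : (fun z : ℤ => a j z * D j z)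
        = fun z => a j z * (∑' w : ℤ, a j w * c (z - w)) - a j z * I ^ 2 := by
      funext z; rw [hDz z]; ring
    rw [h2, hE]
    have hSE : Summable (fun z : ℤ => a j z * (∑' w : ℤ, a j w * c (z - w))) := by
      refine Summable.of_norm_bounded ((ha_summable j).mul_right B) fun z => ?_
      rw [Real.norm_eq_abs, abs_mul, abs_of_nonneg (ha_nonneg j z)]
      refine mul_le_mul_of_nonneg_left ?_ (ha_nonneg j z)
      have h := norm_tsum_le_tsum_norm (f := fun w : ℤ => a j w * c (z - w)) ?_
      · rw [Real.norm_eq_abs] at h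
        refine h.trans ?_
        have : ∑' w : ℤ, ‖a j w * c (z - w)‖ ≤ ∑' w : ℤ, a j w * B := by
          refine Summable.tsum_le_tsum (fun w => ?_) ((hSc j z).abs.congr fun w => by
            rw [Real.norm_eq_abs]) ((ha_summable j).mul_right B)
          rw [Real.norm_eq_abs, abs_mul, abs_of_nonneg (ha_nonneg j w)]
          exact mul_le_mul_of_nonneg_left (hc_abs _) (ha_nonneg j w)
        rw [tsum_mul_right, ha_sum j, one_mul] at this
        exact this
      · exact ((hSc j z).abs.congr fun w => by rw [Real.norm_eq_abs])
    rw [Summable.tsum_sub hSE ((ha_summable j).mul_right _), tsum_mul_right, ha_sum j, one_mul]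
  -- supremum bound
  have hbdd : ∀ j, BddAbove (Set.range (a j)) := by
    intro j
    refine ⟨1, ?_⟩
    rintro x ⟨z, rfl⟩
    rw [← ha_sum j]
    exact Summable.le_tsum (ha_summable j) z fun i _ => ha_nonneg j i
  have ha_le_sup : ∀ j z, a j z ≤ ⨆ w, a j w := fun j z => le_ciSup (hbdd j) z
  have hsup_nonneg : ∀ j, 0 ≤ ⨆ w, a j w := fun j => (ha_nonneg j 0).trans (ha_le_sup j 0)
  -- per-z tail estimate
  have key : ∀ (ε : ℝ), 0 < ε → ∀ (K : ℕ), (∀ k : ℤ, (K : ℤ) ≤ |k| → |c k - I ^ 2| ≤ ε) →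
      ∀ (j : ℕ) (z : ℤ), (∑' w : ℤ, a j w * |c (z - w) - I ^ 2|)
        ≤ 2 * B * (2 * K + 1) * (⨆ w, a j w) + ε := by
    intro ε hε K hK j z
    set S : Finset ℤ := Finset.Icc (z - K) (z + K) with hS_def
    rw [← Summable.sum_add_tsum_subtype_compl (hSe j z) S]
    have hcard : (S.card : ℝ) = 2 * K + 1 := by
      rw [hS_def, Int.card_Icc]
      have h0 : (z + K + 1 - (z - K)) = (2 * K + 1 : ℤ) := by ring
      rw [h0]
      have h1 : ((2 * K + 1 : ℤ)).toNat = 2 * K + 1 := by omega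
      rw [h1]
      push_cast; ring
    have h1 : ∑ w ∈ S, a j w * |c (z - w) - I ^ 2| ≤ 2 * B * (2 * K + 1) * (⨆ w, a j w) := by
      have hterm : ∀ w ∈ S, a j w * |c (z - w) - I ^ 2| ≤ (2 * B) * (⨆ w, a j w) := by
        intro w _
        calc a j w * |c (z - w) - I ^ 2| ≤ a j w * (2 * B) :=
              mul_le_mul_of_nonneg_left (hc_bound _) (ha_nonneg j w)
          _ = (2 * B) * a j w := by ring
          _ ≤ (2 * B) * (⨆ w, a j w) :=
              mul_le_mul_of_nonneg_left (ha_le_sup j w) (by linarith)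
      calc ∑ w ∈ S, a j w * |c (z - w) - I ^ 2| ≤ S.card • ((2 * B) * (⨆ w, a j w)) :=
            Finset.sum_le_card_nsmul S _ _ hterm
        _ = (S.card : ℝ) * ((2 * B) * (⨆ w, a j w)) := by rw [nsmul_eq_mul]
        _ = 2 * B * (2 * K + 1) * (⨆ w, a j w) := by rw [hcard]; ring
    have h2 : (∑' w : {w : ℤ // w ∉ S}, a j (w : ℤ) * |c (z - (w : ℤ)) - I ^ 2|) ≤ ε := by
      have hstep : (∑' w : {w : ℤ // w ∉ S}, a j (w : ℤ) * |c (z - (w : ℤ)) - I ^ 2|)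
          ≤ ∑' w : {w : ℤ // w ∉ S}, a j (w : ℤ) * ε := by
        refine Summable.tsum_le_tsum (fun w => ?_) ((hSe j z).subtype _) (((ha_summable j).mul_right ε).subtype _)
        refine mul_le_mul_of_nonneg_left ?_ (ha_nonneg j _)
        refine hK _ ?_
        obtain ⟨w, hw0⟩ := w
        show (K : ℤ) ≤ |z - w|
        rw [hS_def, Finset.mem_Icc] at hw0
        rcases abs_cases (z - w) with ⟨h1, h2⟩ | ⟨h1, h2⟩ <;> rw [h1] <;> omega
      refine hstep.trans ?_
      rw [tsum_mul_right]
      have hle1 : (∑' w : {w : ℤ // w ∉ S}, a j (w : ℤ)) ≤ 1 := by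
        rw [← ha_sum j]
        exact Summable.tsum_subtype_le (a j) _ (ha_nonneg j) (ha_summable j)
      have hge0 : (0:ℝ) ≤ ∑' w : {w : ℤ // w ∉ S}, a j (w : ℤ) :=
        tsum_nonneg fun w => ha_nonneg j _
      nlinarith [hle1, hε.le, hge0]
    linarith
  -- main convergence of inner ℝ products
  have hmain : Tendsto (fun j => (inner ℝ (P j) (P j) : ℝ)) atTop (nhds (I ^ 2)) := by
    rw [Metric.tendsto_atTop]
    intro ε hε
    obtain ⟨K, hK⟩ := hc_tail (ε / 2) (by positivity)
    have hs0 : Tendsto (fun j => 2 * B * (2 * (K : ℝ) + 1) * (⨆ w, a j w)) atTop (nhds 0) := by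
      have := ha_max.const_mul (2 * B * (2 * (K : ℝ) + 1))
      simpa using this
    have hev : ∀ᶠ j in atTop, 2 * B * (2 * (K : ℝ) + 1) * (⨆ w, a j w) < ε / 2 :=
      hs0.eventually_lt_const (by positivity)
    rw [eventually_atTop] at hev
    obtain ⟨N, hN⟩ := hev
    refine ⟨N, fun j hj => ?_⟩
    rw [Real.dist_eq]
    have hDb : ∀ z : ℤ, |D j z| ≤ 2 * B * (2 * K + 1) * (⨆ w, a j w) + ε / 2 := by
      intro z
      exact (hD_abs j z).trans (key (ε / 2) (by positivity) K hK j z)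
    have habs : |(inner ℝ (P j) (P j) : ℝ) - I ^ 2|
        ≤ 2 * B * (2 * K + 1) * (⨆ w, a j w) + ε / 2 := by
      rw [hPP j]
      have hsn : Summable (fun z : ℤ => ‖a j z * D j z‖) := by
        refine Summable.of_nonneg_of_le (fun z => norm_nonneg _) (fun z => ?_)
          ((ha_summable j).mul_right (2 * B))
        rw [Real.norm_eq_abs, abs_mul, abs_of_nonneg (ha_nonneg j z)]
        exact mul_le_mul_of_nonneg_left (hD_bound j z) (ha_nonneg j z)
      have h1 := norm_tsum_le_tsum_norm (f := fun z : ℤ => a j z * D j z) hsn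
      rw [Real.norm_eq_abs] at h1
      refine h1.trans ?_
      have h2 : ∑' z : ℤ, ‖a j z * D j z‖
          ≤ ∑' z : ℤ, a j z * (2 * B * (2 * K + 1) * (⨆ w, a j w) + ε / 2) := by
        refine Summable.tsum_le_tsum (fun z => ?_) hsn ((ha_summable j).mul_right _)
        rw [Real.norm_eq_abs, abs_mul, abs_of_nonneg (ha_nonneg j z)]
        exact mul_le_mul_of_nonneg_left (hDb z) (ha_nonneg j z)
      rw [tsum_mul_right, ha_sum j, one_mul] at h2
      exact h2
    have hlt := hN j hj
    calc |(inner ℝ (P j) (P j) : ℝ) - I ^ 2|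
        ≤ 2 * B * (2 * K + 1) * (⨆ w, a j w) + ε / 2 := habs
      _ < ε / 2 + ε / 2 := by linarith
      _ = ε := by ring
  -- final step
  have hsq : ∀ j, ‖P j - Θ f‖ = Real.sqrt ((inner ℝ (P j) (P j) : ℝ) - I ^ 2) := by
    intro j
    have h1 : ‖P j - Θ f‖ ^ 2 = (inner ℝ (P j) (P j) : ℝ) - I ^ 2 := by
      rw [norm_sub_sq_real, ← real_inner_self_eq_norm_sq, ← real_inner_self_eq_norm_sq,
        hPΘ j, hΘΘ]
      ring
    rw [← h1, Real.sqrt_sq (norm_nonneg _)]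
  have hzero : Tendsto (fun j => (inner ℝ (P j) (P j) : ℝ) - I ^ 2) atTop (nhds 0) := by
    have := hmain.sub (tendsto_const_nhds (x := I ^ 2))
    simpa using this
  have hfin : Tendsto (fun j => Real.sqrt ((inner ℝ (P j) (P j) : ℝ) - I ^ 2)) atTop (nhds 0) := by
    have := (Real.continuous_sqrt.tendsto 0).comp hzero
    simpa [Function.comp_def] using this
  refine hfin.congr fun j => ?_
  exact (hsq j).symm
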